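/- The rule wM⊡ is derivable in the proof system K⊡: for all L(⊡)-formulas φ and ψ, if ⊢_{K⊡} φ → ψ, then ⊢_{K⊡} ⊡φ ∧ ⊡(ψ → φ) → ⊡ψ. -/

import Mathlib

/-- Formulas of the language L(⊡): propositional variables, ¬, ∧, and ⊡ (`box`). -/
inductive Form : Type
  | var : ℕ → Form
  | neg : Form → Form
  | conj : Form → Form → Form
  | box : Form → Form

namespace Form
/-- Implication, defined as usual. -/
def imp (φ ψ : Form) : Form := neg (conj φ (neg ψ))
/-- Disjunction, defined as usual. -/
def disj (φ ψ : Form) : Form := neg (conj (neg φ) (neg ψ))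
/-- Biconditional, defined as usual. -/
def biff (φ ψ : Form) : Form := conj (imp φ ψ) (imp ψ φ)
/-- The constant ⊤. -/
def top : Form := imp (var 0) (var 0)
end Form

/-- A bimodal model: a nonempty set of worlds, two accessibility relations and a valuation. -/
structure BiModel : Type 1 where
  S : Type
  ne : Nonempty S
  R1 : S → S → Prop
  R2 : S → S → Prop
  V : ℕ → Set S

/-- Truth of a formula at a world: ⊡φ holds at s iff all R1-successors and
R2-successors of s agree on the truth value of φ. -/
def sat (M : BiModel) : M.S → Form → Prop
  | s, .var n => s ∈ M.V n
  | s, .neg φ => ¬ sat M s φ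
  | s, .conj φ ψ => sat M s φ ∧ sat M s ψ
  | s, .box φ => ∀ t u, M.R1 s t → M.R2 s u → (sat M t φ ↔ sat M u φ)

/-- Boolean evaluation treating boxed formulas as atoms (for defining tautologies). -/
def beval (v : Form → Bool) : Form → Bool
  | .var n => v (.var n)
  | .neg φ => !beval v φ
  | .conj φ ψ => beval v φ && beval v ψ
  | .box φ => v (.box φ)

/-- φ is an instance of a propositional tautology. -/
def Form.isTaut (φ : Form) : Prop := ∀ v : Form → Bool, beval v φ = true

/-- Theorems of the system K⊡ extended with the extra axioms in `Ext`:
propositional tautologies, ⊡⊤, ⊡EQU, ⊡CON, ⊡DIS, extra axioms,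
closed under modus ponens and RE⊡. -/
inductive KThm (Ext : Form → Prop) : Form → Prop
  | taut {φ : Form} : φ.isTaut → KThm Ext φ
  | boxTop : KThm Ext (Form.box Form.top)
  | equ (φ : Form) : KThm Ext ((Form.box φ).biff (Form.box (Form.neg φ)))
  | con (φ ψ : Form) :
      KThm Ext (((Form.box φ).conj (Form.box ψ)).imp (Form.box (φ.conj ψ)))
  | dis (φ ψ χ : Form) :
      KThm Ext ((Form.box φ).imp
        ((Form.box (φ.disj ψ)).disj (Form.box ((Form.neg φ).disj χ))))
  | ext {φ : Form} : Ext φ → KThm Ext φ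
  | mp {φ ψ : Form} : KThm Ext (φ.imp ψ) → KThm Ext φ → KThm Ext ψ
  | re {φ ψ : Form} : KThm Ext (φ.biff ψ) → KThm Ext ((Form.box φ).biff (Form.box ψ))

/-- Γ ⊢ φ: φ is derivable from theorems of the system together with premises
in Γ using modus ponens. -/
inductive Deriv (Ext : Form → Prop) (Γ : Set Form) : Form → Prop
  | thm {φ : Form} : KThm Ext φ → Deriv Ext Γ φ
  | prem {φ : Form} : φ ∈ Γ → Deriv Ext Γ φ
  | mp {φ ψ : Form} : Deriv Ext Γ (φ.imp ψ) → Deriv Ext Γ φ → Deriv Ext Γ ψ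

/-- No extra axioms: the minimal system K⊡. -/
def NoExt : Form → Prop := fun _ => False

section Aux

@[simp] lemma beval_imp (v : Form → Bool) (φ ψ : Form) :
    beval v (φ.imp ψ) = (!beval v φ || beval v ψ) := by
  simp [Form.imp, beval]

@[simp] lemma beval_disj (v : Form → Bool) (φ ψ : Form) :
    beval v (φ.disj ψ) = (beval v φ || beval v ψ) := by
  simp [Form.disj, beval]

@[simp] lemma beval_biff (v : Form → Bool) (φ ψ : Form) :
    beval v (φ.biff ψ) = (beval v φ == beval v ψ) := by
  simp [Form.biff, Form.imp, beval]
  cases beval v φ <;> cases beval v ψ <;> simp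

end Aux

/-- The rule wM⊡ is derivable in K⊡: if ⊢ φ → ψ then ⊢ ⊡φ ∧ ⊡(ψ → φ) → ⊡ψ. -/


theorem stmt11 (φ ψ : Form) (h : KThm NoExt (φ.imp ψ)) :
    KThm NoExt (((Form.box φ).conj (Form.box (ψ.imp φ))).imp (Form.box ψ)) := by
  set C : Form := ((φ.neg).disj (ψ.neg)).conj (ψ.imp φ) with hC
  -- A2 : ⊡(φ∨ψ) ↔ ⊡ψ
  have h2 : KThm NoExt ((Form.box (φ.disj ψ)).biff (Form.box ψ)) := by
    apply KThm.re
    apply KThm.mp (φ := φ.imp ψ)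
    · apply KThm.taut
      intro v
      simp [beval, Form.conj]
    · exact h
  -- A3 : ⊡C ↔ ⊡¬ψ
  have h3 : KThm NoExt ((Form.box C).biff (Form.box ψ.neg)) := by
    apply KThm.re
    apply KThm.taut
    intro v
    simp [hC, beval, Form.conj]
    cases beval v φ <;> cases beval v ψ <;> simp
  -- A4 : ⊡ψ ↔ ⊡¬ψ
  have h4 := KThm.equ (Ext := NoExt) ψ
  -- A5 : ⊡(¬φ∨¬ψ) ∧ ⊡(ψ→φ) → ⊡C
  have h5 := KThm.con (Ext := NoExt) ((φ.neg).disj (ψ.neg)) (ψ.imp φ)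
  -- A6 : ⊡φ → ⊡(φ∨ψ) ∨ ⊡(¬φ∨¬ψ)
  have h6 := KThm.dis (Ext := NoExt) φ ψ (ψ.neg)
  -- glue tautology
  have taut : KThm NoExt
      (Form.imp ((Form.box (φ.disj ψ)).biff (Form.box ψ))
      (Form.imp ((Form.box C).biff (Form.box ψ.neg))
      (Form.imp ((Form.box ψ).biff (Form.box ψ.neg))
      (Form.imp (((Form.box ((φ.neg).disj (ψ.neg))).conj (Form.box (ψ.imp φ))).imp (Form.box C))
      (Form.imp ((Form.box φ).imp ((Form.box (φ.disj ψ)).disj (Form.box ((Form.neg φ).disj (ψ.neg)))))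
      (((Form.box φ).conj (Form.box (ψ.imp φ))).imp (Form.box ψ))))))) := by
    apply KThm.taut
    intro v
    simp only [beval_imp, beval_disj, beval_biff, beval, Form.conj]
    generalize v (Form.box (φ.disj ψ)) = a
    generalize v (Form.box ψ) = b
    generalize v (Form.box ((((φ.neg).disj (ψ.neg)).conj (ψ.imp φ)))) = c
    generalize v (Form.box (ψ.neg)) = d
    generalize v (Form.box ((φ.neg).disj (ψ.neg))) = e
    generalize v (Form.box (ψ.imp φ)) = f
    generalize v (Form.box φ) = g
    revert a b c d e f g
    decide
  exact ((((taut.mp h2).mp h3).mp h4).mp h5).mp h6
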